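/- A linear subspace L of ℝ^{n+m} is an n-dimensional space-like subspace if and only if L is the column span of a block matrix [I_n; Y] (top block the n×n identity, bottom block an m×n real matrix Y) for some Y such that I_n − YᵀY is positive definite. -/

import Mathlib

open Matrix

noncomputable section

/-- The diagonal matrix with `n` entries `1` followed by `m` entries `-1`. -/
def J (n m : ℕ) : Matrix (Fin n ⊕ Fin m) (Fin n ⊕ Fin m) ℝ :=
  Matrix.fromBlocks 1 0 0 (-1)

/-- The bilinear form `g(u,v) = uᵀ J v`. -/
def g (n m : ℕ) (u v : Fin n ⊕ Fin m → ℝ) : ℝ := u ⬝ᵥ (J n m) *ᵥ v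

/-- A subspace is space-like if `g` restricted to it is positive definite. -/
def SpaceLike (n m : ℕ) (L : Submodule ℝ (Fin n ⊕ Fin m → ℝ)) : Prop :=
  ∀ x ∈ L, x ≠ 0 → 0 < g n m x x

lemma g_elim (n m : ℕ) (a : Fin n → ℝ) (b : Fin m → ℝ) :
    g n m (Sum.elim a b) (Sum.elim a b) = a ⬝ᵥ a - b ⬝ᵥ b := by
  simp [g, _root_.J, Matrix.fromBlocks_mulVec, sumElim_dotProduct_sumElim,
    Matrix.neg_mulVec, sub_eq_add_neg]

lemma quad_eq (n m : ℕ) (Y : Matrix (Fin m) (Fin n) ℝ) (a : Fin n → ℝ) :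
    a ⬝ᵥ ((1 - Yᵀ * Y) *ᵥ a) = a ⬝ᵥ a - (Y *ᵥ a) ⬝ᵥ (Y *ᵥ a) := by
  rw [Matrix.sub_mulVec, dotProduct_sub, Matrix.one_mulVec, ← Matrix.mulVec_mulVec,
    Matrix.dotProduct_mulVec, Matrix.vecMul_transpose]

lemma elim_ne_zero {n m : ℕ} {a : Fin n → ℝ} (b : Fin m → ℝ) (ha : a ≠ 0) :
    Sum.elim a b ≠ 0 := fun h => ha (funext fun i => congrFun h (Sum.inl i))

/-- `L` is an `n`-dimensional space-like subspace iff `L` is the column span of a block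
matrix `[Iₙ; Y]` with `Iₙ - YᵀY` positive definite. -/
theorem stmt1 (n m : ℕ) (hn : 0 < n) (hnm : n ≤ m)
    (L : Submodule ℝ (Fin n ⊕ Fin m → ℝ)) :
    (SpaceLike n m L ∧ Module.finrank ℝ L = n) ↔
      ∃ Y : Matrix (Fin m) (Fin n) ℝ, (1 - Yᵀ * Y).PosDef ∧
        L = LinearMap.range (Matrix.fromRows (1 : Matrix (Fin n) (Fin n) ℝ) Y).mulVecLin := by
  constructor
  · rintro ⟨hsl, hrank⟩
    -- projection to first components
    set p : L →ₗ[ℝ] (Fin n → ℝ) := (LinearMap.funLeft ℝ ℝ Sum.inl).comp L.subtype with hp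
    have hpapply : ∀ x : L, p x = (x : Fin n ⊕ Fin m → ℝ) ∘ Sum.inl := fun _ => rfl
    have hxelim : ∀ x : Fin n ⊕ Fin m → ℝ,
        x = Sum.elim (x ∘ Sum.inl) (x ∘ Sum.inr) := by
      intro x; funext i; cases i <;> rfl
    have hinj : Function.Injective p := by
      rw [← LinearMap.ker_eq_bot, LinearMap.ker_eq_bot']
      intro x hx
      by_contra hx0
      have hx0' : (x : Fin n ⊕ Fin m → ℝ) ≠ 0 := fun h => hx0 (Subtype.ext h)
      have hpos := hsl x x.2 hx0'
      have ha : (x : Fin n ⊕ Fin m → ℝ) ∘ Sum.inl = 0 := hx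
      rw [hxelim (x : Fin n ⊕ Fin m → ℝ), ha, g_elim] at hpos
      have : (0:ℝ) ≤ ((x : Fin n ⊕ Fin m → ℝ) ∘ Sum.inr) ⬝ᵥ
          ((x : Fin n ⊕ Fin m → ℝ) ∘ Sum.inr) := by
        have h := dotProduct_self_star_nonneg ((x : Fin n ⊕ Fin m → ℝ) ∘ Sum.inr)
        rwa [star_trivial] at h
      simp only [zero_dotProduct] at hpos
      linarith
    have hdim : Module.finrank ℝ L = Module.finrank ℝ (Fin n → ℝ) := by
      rw [hrank, Module.finrank_fin_fun]
    set e := p.linearEquivOfInjective hinj hdim with he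
    have heapply : ∀ x : L, e x = p x := fun x => rfl
    set q : (Fin n → ℝ) →ₗ[ℝ] (Fin m → ℝ) :=
      (LinearMap.funLeft ℝ ℝ Sum.inr).comp (L.subtype.comp e.symm.toLinearMap) with hq
    have hqapply : ∀ a, q a = ((e.symm a : Fin n ⊕ Fin m → ℝ)) ∘ Sum.inr := fun _ => rfl
    set Y := LinearMap.toMatrix' q with hYdef
    have hY : ∀ a, Y *ᵥ a = q a := by
      intro a
      rw [hYdef, ← Matrix.mulVecLin_apply, ← Matrix.toLin'_apply', Matrix.toLin'_toMatrix']
    have key : ∀ a : Fin n → ℝ, ((e.symm a : Fin n ⊕ Fin m → ℝ)) = Sum.elim a (q a) := by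
      intro a
      have h1 : ((e.symm a : Fin n ⊕ Fin m → ℝ)) ∘ Sum.inl = a := by
        rw [← hpapply, ← heapply, e.apply_symm_apply]
      funext i
      cases i with
      | inl i => rw [Sum.elim_inl]; exact congrFun h1 i
      | inr j => rw [Sum.elim_inr, hqapply]; rfl
    have hmem : ∀ x, x ∈ L ↔ ∃ a, Sum.elim a (q a) = x := by
      intro x
      constructor
      · intro hx
        refine ⟨(x ∘ Sum.inl), ?_⟩
        have : e.symm (x ∘ Sum.inl) = ⟨x, hx⟩ := by
          apply e.injective
          rw [e.apply_symm_apply, heapply, hpapply]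
        rw [← key (x ∘ Sum.inl)] at *
        rw [this]
      · rintro ⟨a, rfl⟩
        rw [← key a]
        exact (e.symm a).2
    refine ⟨Y, Matrix.PosDef.of_dotProduct_mulVec_pos ?_ ?_, ?_⟩
    · -- Hermitian
      refine Matrix.isHermitian_one.sub ?_
      have := Matrix.isHermitian_conjTranspose_mul_self Y
      rwa [Matrix.conjTranspose_eq_transpose_of_trivial] at this
    · -- positivity
      intro a ha
      have hx : Sum.elim a (q a) ∈ L := (hmem _).2 ⟨a, rfl⟩
      have hpos := hsl _ hx (elim_ne_zero _ ha)
      rw [g_elim] at hpos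
      have : star a = a := by funext i; simp
      rw [this, quad_eq, hY]
      exact hpos
    · -- equality of subspaces
      ext x
      rw [hmem, LinearMap.mem_range]
      constructor
      · rintro ⟨a, rfl⟩
        exact ⟨a, by rw [Matrix.mulVecLin_apply, Matrix.fromRows_mulVec,
          Matrix.one_mulVec, hY]⟩
      · rintro ⟨a, rfl⟩
        exact ⟨a, by rw [Matrix.mulVecLin_apply, Matrix.fromRows_mulVec,
          Matrix.one_mulVec, hY]⟩
  · rintro ⟨Y, hpd, rfl⟩
    have hform : ∀ a : Fin n → ℝ,
        (Matrix.fromRows (1 : Matrix (Fin n) (Fin n) ℝ) Y).mulVecLin a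
          = Sum.elim a (Y *ᵥ a) := by
      intro a
      rw [Matrix.mulVecLin_apply, Matrix.fromRows_mulVec, Matrix.one_mulVec]
    constructor
    · intro x hx hx0
      obtain ⟨a, rfl⟩ := LinearMap.mem_range.mp hx
      rw [hform] at hx0 ⊢
      have ha : a ≠ 0 := by
        rintro rfl
        apply hx0
        funext i; cases i <;> simp
      have := hpd.dotProduct_mulVec_pos ha
      have hstar : star a = a := by funext i; simp
      rw [hstar, quad_eq] at this
      rwa [g_elim]
    · have hinj : Function.Injective
          (Matrix.fromRows (1 : Matrix (Fin n) (Fin n) ℝ) Y).mulVecLin := by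
        intro a b hab
        rw [hform, hform] at hab
        funext i
        exact congrFun hab (Sum.inl i)
      rw [LinearMap.finrank_range_of_inj hinj, Module.finrank_fin_fun]
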